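/- Let Q be a convex set in ℝⁿ = ℝ^{n′} × ℝ^{n″}, and let π′, π″ denote the projections onto the components ℝ^{n′} and ℝ^{n″} respectively. Let Q′ be a slice orthogonal to the second component, i.e. Q′ = (π″)⁻¹(x̄″) ∩ Q for some x̄″ ∈ π″(Q). Then there exists a constant C(n), depending only on n = n′ + n″, such that C(n) Lebⁿ(Q) ≥ ℋ^{n′}(Q′) ℋ^{n″}(π″(Q)), where ℋ^d denotes the d-dimensional Hausdorff measure. -/

import Mathlib

open Set MeasureTheory Metric Bornology
open scoped ENNReal NNReal Pointwise

noncomputable section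

abbrev Euc (n : ℕ) := EuclideanSpace ℝ (Fin n)

/-- Partial gradient of the cost in the first variable: `D_x c(x,y)`. -/
noncomputable def gradX (n : ℕ) (c : Euc n → Euc n → ℝ) (x y : Euc n) : Euc n :=
  gradient (fun x' => c x' y) x

/-- Partial gradient of the cost in the second variable: `D_y c(x,y)`. -/
noncomputable def gradY (n : ℕ) (c : Euc n → Euc n → ℝ) (x y : Euc n) : Euc n :=
  gradient (fun y' => c x y') y

/-- Mixed second derivative `D²_{xy} c` as a continuous linear map. -/
noncomputable def DxyC (n : ℕ) (c : Euc n → Euc n → ℝ) (x y : Euc n) : Euc n →L[ℝ] Euc n :=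
  fderiv ℝ (fun x' => gradY n c x' y) x

/-- Second derivative `D²_{xx} c`. -/
noncomputable def DxxC (n : ℕ) (c : Euc n → Euc n → ℝ) (x y : Euc n) : Euc n →L[ℝ] Euc n :=
  fderiv ℝ (fun x' => gradX n c x' y) x

/-- Third derivative `D²_{xx} D_y c`. -/
noncomputable def DxxyC (n : ℕ) (c : Euc n → Euc n → ℝ) (x y : Euc n) :
    Euc n →L[ℝ] Euc n →L[ℝ] Euc n :=
  fderiv ℝ (fun x' => DxyC n c x' y) x

/-- `β⁺_c = ‖D²_{xy} c‖_{L∞(U×V)}`. -/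
noncomputable def betaPlus (n : ℕ) (c : Euc n → Euc n → ℝ) (U V : Set (Euc n)) : ℝ :=
  sSup ((fun p : Euc n × Euc n => ‖DxyC n c p.1 p.2‖) '' (U ×ˢ V))

/-- `β⁻_c = ‖(D²_{xy} c)⁻¹‖_{L∞(U×V)}`. -/
noncomputable def betaMinus (n : ℕ) (c : Euc n → Euc n → ℝ) (U V : Set (Euc n)) : ℝ :=
  sSup ((fun p : Euc n × Euc n => ‖(DxyC n c p.1 p.2).inverse‖) '' (U ×ˢ V))

/-- `γ⁺_c = ‖det D²_{xy} c‖_{L∞(U×V)}`. -/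
noncomputable def gammaPlus (n : ℕ) (c : Euc n → Euc n → ℝ) (U V : Set (Euc n)) : ℝ :=
  sSup ((fun p : Euc n × Euc n =>
    |LinearMap.det ((DxyC n c p.1 p.2 : Euc n →L[ℝ] Euc n) : Euc n →ₗ[ℝ] Euc n)|) '' (U ×ˢ V))

/-- `γ⁻_c = ‖(det D²_{xy} c)⁻¹‖_{L∞(U×V)}`. -/
noncomputable def gammaMinus (n : ℕ) (c : Euc n → Euc n → ℝ) (U V : Set (Euc n)) : ℝ :=
  sSup ((fun p : Euc n × Euc n =>
    |LinearMap.det ((DxyC n c p.1 p.2 : Euc n →L[ℝ] Euc n) : Euc n →ₗ[ℝ] Euc n)|⁻¹) '' (U ×ˢ V))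

noncomputable def supDxx (n : ℕ) (c : Euc n → Euc n → ℝ) (U V : Set (Euc n)) : ℝ :=
  sSup ((fun p : Euc n × Euc n => ‖DxxC n c p.1 p.2‖) '' (U ×ˢ V))

noncomputable def supDx (n : ℕ) (c : Euc n → Euc n → ℝ) (U V : Set (Euc n)) : ℝ :=
  sSup ((fun p : Euc n × Euc n => ‖gradX n c p.1 p.2‖) '' (U ×ˢ V))

noncomputable def supDxxy (n : ℕ) (c : Euc n → Euc n → ℝ) (U V : Set (Euc n)) : ℝ :=
  sSup ((fun p : Euc n × Euc n => ‖DxxyC n c p.1 p.2‖) '' (U ×ˢ V))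

/-- The constant `M_c` from Theorem 4.3. -/
noncomputable def Mconst (n : ℕ) (c : Euc n → Euc n → ℝ) (U V : Set (Euc n)) : ℝ :=
  (betaMinus n c U V) ^ 2 * supDxx n c U V +
    (betaMinus n c U V) ^ 3 * supDx n c U V * supDxxy n c U V

/-- The constant `ε_c` of Lemma 6.1: `1/ε_c = 2 (β⁺)⁴ (β⁻)⁶ ‖D³_{xxy} c‖_∞`. -/
noncomputable def epsC (n : ℕ) (c : Euc n → Euc n → ℝ) (U V : Set (Euc n)) : ℝ :=
  (2 * (betaPlus n c U V) ^ 4 * (betaMinus n c U V) ^ 6 * supDxxy n c U V)⁻¹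

/-- Condition (B0). -/
def B0cond (n : ℕ) (c : Euc n → Euc n → ℝ) (U V : Set (Euc n)) : Prop :=
  IsOpen U ∧ IsBounded U ∧ IsOpen V ∧ IsBounded V ∧
    ContDiffOn ℝ 4 (Function.uncurry c) (closure U ×ˢ closure V)

/-- `f` is a (C¹-) diffeomorphism from `S` onto its range. -/
def DiffeoOnto (n : ℕ) (f : Euc n → Euc n) (S : Set (Euc n)) : Prop :=
  Set.InjOn f S ∧ ContDiffOn ℝ 1 f S ∧ ContDiffOn ℝ 1 (Function.invFunOn f S) (f '' S)

/-- Condition (B1) (bi-twist). -/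
def B1cond (n : ℕ) (c : Euc n → Euc n → ℝ) (U V : Set (Euc n)) : Prop :=
  (∀ y ∈ closure V, DiffeoOnto n (fun x => -gradY n c x y) (closure U)) ∧
  (∀ x ∈ closure U, DiffeoOnto n (fun y => -gradX n c x y) (closure V))

/-- `U_ȳ := -D_y c(U, ȳ)`. -/
def Uyset (n : ℕ) (c : Euc n → Euc n → ℝ) (U : Set (Euc n)) (ybar : Euc n) : Set (Euc n) :=
  (fun x => -gradY n c x ybar) '' U

/-- `V_x̄ := -D_x c(x̄, V)`. -/
def Vxset (n : ℕ) (c : Euc n → Euc n → ℝ) (V : Set (Euc n)) (xbar : Euc n) : Set (Euc n) :=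
  (fun y => -gradX n c xbar y) '' V

/-- Condition (B2) (bi-convexity). -/
def B2cond (n : ℕ) (c : Euc n → Euc n → ℝ) (U V : Set (Euc n)) : Prop :=
  (∀ y ∈ closure V, Convex ℝ (Uyset n c U y)) ∧ (∀ x ∈ closure U, Convex ℝ (Vxset n c V x))

/-- A strongly convex set: each boundary point is touched from outside by a sphere of
radius `R` enclosing the set. -/
def StronglyConvexSet (n : ℕ) (Q : Set (Euc n)) : Prop :=
  Convex ℝ Q ∧ ∃ R : ℝ, 0 < R ∧ ∀ x ∈ frontier Q, ∃ z : Euc n, dist x z = R ∧ Q ⊆ closedBall z R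

/-- Condition (B2s). -/
def B2scond (n : ℕ) (c : Euc n → Euc n → ℝ) (U V : Set (Euc n)) : Prop :=
  (∀ y ∈ closure V, StronglyConvexSet n (Uyset n c U y)) ∧
  (∀ x ∈ closure U, StronglyConvexSet n (Vxset n c V x))

/-- An affinely parameterized line segment on `[-1,1]`. -/
def IsAffineSeg (n : ℕ) (F : ℝ → Euc n × Euc n) : Prop :=
  ∃ a b : Euc n × Euc n, ∀ t ∈ Icc (-1 : ℝ) 1, F t = a + t • b

/-- `∂²/∂s∂t c(x(s), y(t))` at `(0,0)`. -/
noncomputable def crossDiff2 (n : ℕ) (c : Euc n → Euc n → ℝ) (x y : ℝ → Euc n) : ℝ :=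
  deriv (fun s => deriv (fun t => c (x s) (y t)) 0) 0

/-- `∂⁴/∂s²∂t² c(x(s), y(t))` at `(0,0)`. -/
noncomputable def crossDiff4 (n : ℕ) (c : Euc n → Euc n → ℝ) (x y : ℝ → Euc n) : ℝ :=
  deriv (deriv (fun s => deriv (deriv (fun t => c (x s) (y t))) 0)) 0

/-- Condition (B3) (= A3w). -/
def B3cond (n : ℕ) (c : Euc n → Euc n → ℝ) (U V : Set (Euc n)) : Prop :=
  ∀ x y : ℝ → Euc n, (∀ t ∈ Icc (-1 : ℝ) 1, x t ∈ closure U) →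
    (∀ t ∈ Icc (-1 : ℝ) 1, y t ∈ closure V) →
    IsAffineSeg n (fun t => (gradY n c (x t) (y 0), gradX n c (x 0) (y t))) →
    crossDiff2 n c x y = 0 → crossDiff4 n c x y ≤ 0

/-- Condition (B4) (non-negative cross-curvature). -/
def B4cond (n : ℕ) (c : Euc n → Euc n → ℝ) (U V : Set (Euc n)) : Prop :=
  ∀ x y : ℝ → Euc n, (∀ t ∈ Icc (-1 : ℝ) 1, x t ∈ closure U) →
    (∀ t ∈ Icc (-1 : ℝ) 1, y t ∈ closure V) →
    IsAffineSeg n (fun t => (gradY n c (x t) (y 0), gradX n c (x 0) (y t))) →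
    crossDiff4 n c x y ≤ 0

/-- The `c*`-transform `u^{c*}(y) = sup_{x ∈ A} (-c(x,y) - u(x))`. -/
noncomputable def cStarT (n : ℕ) (c : Euc n → Euc n → ℝ) (A : Set (Euc n)) (u : Euc n → ℝ)
    (y : Euc n) : ℝ :=
  sSup ((fun x => -c x y - u x) '' A)

/-- `u` is `c`-convex on `A` (relative to the target set `B`): `u = (u^{c*})^c`. -/
def CConvexOn (n : ℕ) (c : Euc n → Euc n → ℝ) (A B : Set (Euc n)) (u : Euc n → ℝ) : Prop :=
  ∀ x ∈ A, u x = sSup ((fun y => -c x y - cStarT n c A u y) '' B)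

/-- The `c`-subdifferential `∂ᶜu ⊂ A × B`. -/
def cSubdiff (n : ℕ) (c : Euc n → Euc n → ℝ) (A B : Set (Euc n)) (u : Euc n → ℝ) :
    Set (Euc n × Euc n) :=
  {p | p.1 ∈ A ∧ p.2 ∈ B ∧ u p.1 + cStarT n c A u p.2 + c p.1 p.2 = 0}

def cSubdiffAt (n : ℕ) (c : Euc n → Euc n → ℝ) (A B : Set (Euc n)) (u : Euc n → ℝ)
    (x : Euc n) : Set (Euc n) :=
  {y | (x, y) ∈ cSubdiff n c A B u}

def cSubdiffImg (n : ℕ) (c : Euc n → Euc n → ℝ) (A B : Set (Euc n)) (u : Euc n → ℝ)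
    (X : Set (Euc n)) : Set (Euc n) :=
  ⋃ x ∈ X, cSubdiffAt n c A B u x

/-- `∂^{c*}u^{c*}(Y) = {x : ∃ y ∈ Y, (x,y) ∈ ∂ᶜu}`. -/
def cSubdiffPre (n : ℕ) (c : Euc n → Euc n → ℝ) (A B : Set (Euc n)) (u : Euc n → ℝ)
    (Y : Set (Euc n)) : Set (Euc n) :=
  {x | ∃ y ∈ Y, (x, y) ∈ cSubdiff n c A B u}

/-- `|∂ᶜu| ≥ lam` on `S`. -/
def MAge (n : ℕ) (c : Euc n → Euc n → ℝ) (A B : Set (Euc n)) (u : Euc n → ℝ) (lam : ℝ)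
    (S : Set (Euc n)) : Prop :=
  ∀ X : Set (Euc n), X ⊆ S → MeasurableSet X →
    ENNReal.ofReal lam * volume X ≤ volume (cSubdiffImg n c A B u X)

/-- `|∂ᶜu| ≤ lam` on `S`. -/
def MAle (n : ℕ) (c : Euc n → Euc n → ℝ) (A B : Set (Euc n)) (u : Euc n → ℝ) (lam : ℝ)
    (S : Set (Euc n)) : Prop :=
  ∀ X : Set (Euc n), X ⊆ S → MeasurableSet X →
    volume (cSubdiffImg n c A B u X) ≤ ENNReal.ofReal lam * volume X

/-- The inverse of the cost-exponential coordinate change `q(x) = -D_y c(x, ȳ)`. -/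
noncomputable def xOf (n : ℕ) (c : Euc n → Euc n → ℝ) (U : Set (Euc n)) (ybar : Euc n) :
    Euc n → Euc n :=
  Function.invFunOn (fun x => -gradY n c x ybar) (closure U)

/-- `cl U_ȳ := -D_y c(cl U, ȳ)`. -/
def clUy (n : ℕ) (c : Euc n → Euc n → ℝ) (U : Set (Euc n)) (ybar : Euc n) : Set (Euc n) :=
  (fun x => -gradY n c x ybar) '' closure U

/-- The modified cost `c̃(q,y) = c(x(q), y) - c(x(q), ȳ)`. -/
noncomputable def modCost (n : ℕ) (c : Euc n → Euc n → ℝ) (U : Set (Euc n)) (ybar : Euc n)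
    (q y : Euc n) : ℝ :=
  c (xOf n c U ybar q) y - c (xOf n c U ybar q) ybar

/-- The modified potential `ũ(q) = u(x(q)) + c(x(q), ȳ)`. -/
noncomputable def modPot (n : ℕ) (c : Euc n → Euc n → ℝ) (U : Set (Euc n)) (ybar : Euc n)
    (u : Euc n → ℝ) (q : Euc n) : ℝ :=
  u (xOf n c U ybar q) + c (xOf n c U ybar q) ybar

/-- The `c̃`-cone generated by `qt` and `Q` with height `-h0 > 0`. -/
noncomputable def cConeFun (n : ℕ) (ct : Euc n → Euc n → ℝ) (B Q : Set (Euc n)) (qt : Euc n)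
    (h0 : ℝ) (q : Euc n) : ℝ :=
  sSup {r : ℝ | ∃ y ∈ B, r = -ct q y + ct qt y + h0 ∧
    ∀ p ∈ frontier Q, -ct p y + ct qt y + h0 ≤ 0}

/-- The ordinary subdifferential `∂u(x)` relative to a domain `A`. -/
def subdiffAt (n : ℕ) (A : Set (Euc n)) (u : Euc n → ℝ) (x : Euc n) : Set (Euc n) :=
  {p | ∀ ε > 0, ∃ δ > 0, ∀ x' ∈ A, ‖x' - x‖ < δ →
    u x + @inner ℝ _ _ p (x' - x) - ε * ‖x' - x‖ ≤ u x'}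

/-- The dual norm `‖v‖*_K = sup_{w ∈ K} ⟨w, v⟩`. -/
noncomputable def dualNorm (n : ℕ) (K : Set (Euc n)) (v : Euc n) : ℝ :=
  sSup ((fun w => (@inner ℝ _ _ w v : ℝ)) '' K)

/-- The section `S(x̄, ȳ, τ)`. -/
def sectS (n : ℕ) (c : Euc n → Euc n → ℝ) (U : Set (Euc n)) (u : Euc n → ℝ)
    (xbar ybar : Euc n) (τ : ℝ) : Set (Euc n) :=
  {x ∈ U | u x ≤ u xbar - c x ybar + c xbar ybar + τ}

/-- The measure with density `f` restricted to `A`. -/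
noncomputable def densMeasure (n : ℕ) (A : Set (Euc n)) (f : Euc n → ℝ) : Measure (Euc n) :=
  (volume.restrict A).withDensity fun x => ENNReal.ofReal (f x)

end
private lemma exists_haus_le (m : ℕ) :
    ∃ C : ℝ≥0∞, C ≠ ∞ ∧ ∀ s : Set (Euc m), μH[(m : ℝ)] s ≤ C * volume s := by
  set K : ℝ≥0 := (m : ℝ≥0) ^ (2⁻¹ : ℝ) with hK
  refine ⟨(K : ℝ≥0∞) ^ (m : ℝ), ?_, fun s => ?_⟩
  · exact (ENNReal.rpow_lt_top_of_nonneg (by positivity) ENNReal.coe_ne_top).ne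
  · have hlip : LipschitzWith K (⇑(WithLp.equiv 2 (∀ _ : Fin m, ℝ)).symm) := by
      have := PiLp.lipschitzWith_toLp 2 (fun _ : Fin m => ℝ)
      simpa [hK] using this
    have h2 : (μH[(m : ℝ)] : Measure (Fin m → ℝ)) = volume := by
      have := hausdorffMeasure_pi_real (ι := Fin m)
      rwa [Fintype.card_fin] at this
    have h3 : volume ((WithLp.equiv 2 (∀ _ : Fin m, ℝ)) '' s) = volume s := by
      rw [show ((WithLp.equiv 2 (∀ _ : Fin m, ℝ)) '' s)
          = (MeasurableEquiv.toLp 2 (Fin m → ℝ)).symm '' s from rfl,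
        MeasurableEquiv.image_eq_preimage_symm]
      exact (EuclideanSpace.volume_preserving_symm_measurableEquiv_toLp (Fin m)).symm.measure_preimage_emb
        (MeasurableEquiv.measurableEmbedding _) s
    calc μH[(m : ℝ)] s
        = μH[(m : ℝ)] ((WithLp.equiv 2 (∀ _ : Fin m, ℝ)).symm
            '' ((WithLp.equiv 2 (∀ _ : Fin m, ℝ)) '' s)) := by
          rw [Equiv.symm_image_image]
      _ ≤ (K : ℝ≥0∞) ^ (m : ℝ) * μH[(m : ℝ)] ((WithLp.equiv 2 (∀ _ : Fin m, ℝ)) '' s) :=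
          hlip.hausdorffMeasure_image_le (by positivity) _
      _ = (K : ℝ≥0∞) ^ (m : ℝ) * volume s := by rw [h2, h3]

/-- Lemma 6.7: estimating a convex volume using one slice and an
orthogonal projection. -/
theorem convex_volume_slice_projection (n' n'' : ℕ) :
    ∃ C : ℝ, 0 < C ∧
      ∀ Q : Set (Euc n' × Euc n''), Convex ℝ Q →
        ∀ xb ∈ Prod.snd '' Q,
          μH[(n' : ℝ)] (Q ∩ Prod.snd ⁻¹' {xb}) * μH[(n'' : ℝ)] (Prod.snd '' Q) ≤
            ENNReal.ofReal C * volume Q := by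
  obtain ⟨C1, hC1top, hC1⟩ := exists_haus_le n'
  obtain ⟨C2, hC2top, hC2⟩ := exists_haus_le n''
  set D : ℝ≥0∞ := C1 * C2 * ENNReal.ofReal ((2:ℝ) ^ (n' + n'')) with hD
  have hDtop : D ≠ ∞ := by
    rw [hD]
    exact ENNReal.mul_ne_top (ENNReal.mul_ne_top hC1top hC2top) ENNReal.ofReal_ne_top
  refine ⟨D.toReal + 1, by positivity, fun Q hQ xb hxb => ?_⟩
  set S : Set (Euc n') := {x | (x, xb) ∈ Q} with hS
  set P : Set (Euc n'') := Prod.snd '' Q with hPdef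
  -- slice estimate
  have hset : Q ∩ Prod.snd ⁻¹' {xb} = (fun x : Euc n' => (x, xb)) '' S := by
    ext p
    simp only [mem_inter_iff, mem_preimage, mem_singleton_iff, mem_image]
    constructor
    · rintro ⟨h1, h2⟩
      have hp : p = (p.1, xb) := Prod.ext rfl h2
      exact ⟨p.1, show (p.1, xb) ∈ Q by rw [← hp]; exact h1, hp.symm⟩
    · rintro ⟨x, hx, rfl⟩
      exact ⟨hx, rfl⟩
  have hiso : Isometry (fun x : Euc n' => (x, xb)) := by
    refine Isometry.of_dist_eq fun a b => ?_
    simp only [Prod.dist_eq, dist_self]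
    exact max_eq_left dist_nonneg
  have hslice : μH[(n' : ℝ)] (Q ∩ Prod.snd ⁻¹' {xb}) ≤ C1 * volume S := by
    rw [hset]
    calc μH[(n' : ℝ)] ((fun x : Euc n' => (x, xb)) '' S)
        ≤ (1 : ℝ≥0∞) ^ (n' : ℝ) * μH[(n' : ℝ)] S :=
          hiso.lipschitz.hausdorffMeasure_image_le (by positivity) S
      _ = μH[(n' : ℝ)] S := by rw [ENNReal.one_rpow, one_mul]
      _ ≤ C1 * volume S := hC1 S
  have hproj : μH[(n'' : ℝ)] P ≤ C2 * volume P := hC2 P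
  -- the key volume estimate
  obtain ⟨w0, hw0Q, hw0⟩ := hxb
  set P' : Set (Euc n'') := AffineMap.homothety xb (2⁻¹ : ℝ) '' P with hP'def
  have homth : ∀ (m : ℕ) (c p : Euc m),
      AffineMap.homothety c (2⁻¹ : ℝ) p = (2⁻¹ : ℝ) • p + (2⁻¹ : ℝ) • c := by
    intro m c p
    simp only [AffineMap.homothety_apply, vsub_eq_sub, vadd_eq_add]
    module
  have hPconv : Convex ℝ P := hQ.linear_image (LinearMap.snd ℝ (Euc n') (Euc n''))
  have hP'conv : Convex ℝ P' := hPconv.affine_image _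
  have hP'vol : volume P' = ENNReal.ofReal ((2:ℝ)⁻¹ ^ n'') * volume P := by
    rw [hP'def, MeasureTheory.Measure.addHaar_image_homothety]
    congr 2
    rw [finrank_euclideanSpace_fin, abs_of_pos (by positivity)]
  set T : Set (Euc n' × Euc n'') := toMeasurable volume Q with hT
  have hTm : MeasurableSet T := measurableSet_toMeasurable _ _
  have hQT : Q ⊆ T := subset_toMeasurable _ _
  have hTvol : volume T = volume Q := measure_toMeasurable _
  have hsliceT : ∀ z ∈ P',
      ENNReal.ofReal ((2:ℝ)⁻¹ ^ n') * volume S ≤ volume ((fun x => (x, z)) ⁻¹' T) := by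
    rintro _ ⟨y, hyP, rfl⟩
    obtain ⟨w, hwQ, rfl⟩ := hyP
    have himg : AffineMap.homothety w.1 (2⁻¹ : ℝ) '' S
        ⊆ (fun x => (x, AffineMap.homothety xb (2⁻¹ : ℝ) w.2)) ⁻¹' T := by
      rintro _ ⟨s, hs, rfl⟩
      refine hQT ?_
      have hmem : (2⁻¹ : ℝ) • ((s, xb) : Euc n' × Euc n'') + (2⁻¹ : ℝ) • w ∈ Q :=
        hQ hs hwQ (by norm_num) (by norm_num) (by norm_num)
      have heq : ((AffineMap.homothety w.1 (2⁻¹ : ℝ) s,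
          AffineMap.homothety xb (2⁻¹ : ℝ) w.2) : Euc n' × Euc n'')
          = (2⁻¹ : ℝ) • ((s, xb) : Euc n' × Euc n'') + (2⁻¹ : ℝ) • w := by
        refine Prod.ext ?_ ?_
        · simp [homth, Prod.smul_def]
        · simp [homth, Prod.smul_def, add_comm]
      show (AffineMap.homothety w.1 (2⁻¹ : ℝ) s, AffineMap.homothety xb (2⁻¹ : ℝ) w.2) ∈ Q
      rw [heq]; exact hmem
    calc ENNReal.ofReal ((2:ℝ)⁻¹ ^ n') * volume S
        = volume (AffineMap.homothety w.1 (2⁻¹ : ℝ) '' S) := by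
          rw [MeasureTheory.Measure.addHaar_image_homothety]
          congr 2
          rw [finrank_euclideanSpace_fin, abs_of_pos (by positivity)]
      _ ≤ _ := measure_mono himg
  obtain ⟨P'', hP''sub, hP''m, hP''ae⟩ :=
    (hP'conv.nullMeasurableSet (μ := volume)).exists_measurable_subset_ae_eq
  have hP''vol : volume P'' = volume P' := measure_congr hP''ae
  have hkey : ENNReal.ofReal ((2:ℝ)⁻¹ ^ n') * volume S * volume P' ≤ volume Q := by
    calc ENNReal.ofReal ((2:ℝ)⁻¹ ^ n') * volume S * volume P'
        = ENNReal.ofReal ((2:ℝ)⁻¹ ^ n') * volume S * volume P'' := by rw [hP''vol]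
      _ = ∫⁻ _ in P'', ENNReal.ofReal ((2:ℝ)⁻¹ ^ n') * volume S := by
          rw [setLIntegral_const]
      _ ≤ ∫⁻ z in P'', volume ((fun x => (x, z)) ⁻¹' T) := by
          refine setLIntegral_mono (measurable_measure_prodMk_right hTm) fun z hz => ?_
          exact hsliceT z (hP''sub hz)
      _ ≤ ∫⁻ z, volume ((fun x => (x, z)) ⁻¹' T) := lintegral_mono' Measure.restrict_le_self le_rfl
      _ = volume T := by
          rw [show (volume : Measure (Euc n' × Euc n'')) = (volume : Measure (Euc n')).prod volume
            from Measure.volume_eq_prod _ _, Measure.prod_apply_symm hTm]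
      _ = volume Q := hTvol
  have hSP : volume S * volume P ≤ ENNReal.ofReal ((2:ℝ) ^ (n' + n'')) * volume Q := by
    have e1 : ENNReal.ofReal ((2:ℝ) ^ (n' + n''))
        * (ENNReal.ofReal ((2:ℝ)⁻¹ ^ n') * ENNReal.ofReal ((2:ℝ)⁻¹ ^ n'')) = 1 := by
      rw [← ENNReal.ofReal_mul (by positivity), ← ENNReal.ofReal_mul (by positivity)]
      rw [show (2:ℝ) ^ (n' + n'') * ((2:ℝ)⁻¹ ^ n' * (2:ℝ)⁻¹ ^ n'') = 1 by
        rw [pow_add, inv_pow, inv_pow]; field_simp]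
      exact ENNReal.ofReal_one
    have hkey2 : ENNReal.ofReal ((2:ℝ)⁻¹ ^ n') * volume S
        * (ENNReal.ofReal ((2:ℝ)⁻¹ ^ n'') * volume P) ≤ volume Q := by
      calc ENNReal.ofReal ((2:ℝ)⁻¹ ^ n') * volume S * (ENNReal.ofReal ((2:ℝ)⁻¹ ^ n'') * volume P)
          = ENNReal.ofReal ((2:ℝ)⁻¹ ^ n') * volume S * volume P' := by rw [hP'vol]
        _ ≤ volume Q := hkey
    calc volume S * volume P
        = ENNReal.ofReal ((2:ℝ) ^ (n' + n''))
            * (ENNReal.ofReal ((2:ℝ)⁻¹ ^ n') * ENNReal.ofReal ((2:ℝ)⁻¹ ^ n''))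
            * (volume S * volume P) := by rw [e1, one_mul]
      _ = ENNReal.ofReal ((2:ℝ) ^ (n' + n''))
            * (ENNReal.ofReal ((2:ℝ)⁻¹ ^ n') * volume S
              * (ENNReal.ofReal ((2:ℝ)⁻¹ ^ n'') * volume P)) := by ring
      _ ≤ ENNReal.ofReal ((2:ℝ) ^ (n' + n'')) * volume Q := mul_le_mul_right hkey2 _
  calc μH[(n' : ℝ)] (Q ∩ Prod.snd ⁻¹' {xb}) * μH[(n'' : ℝ)] P
      ≤ (C1 * volume S) * (C2 * volume P) := mul_le_mul' hslice hproj
    _ = C1 * C2 * (volume S * volume P) := by ring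
    _ ≤ C1 * C2 * (ENNReal.ofReal ((2:ℝ) ^ (n' + n'')) * volume Q) := mul_le_mul_right hSP _
    _ = D * volume Q := by rw [hD]; ring
    _ ≤ ENNReal.ofReal (D.toReal + 1) * volume Q := by
        refine mul_le_mul_left ?_ _
        rw [← ENNReal.ofReal_toReal hDtop]
        exact ENNReal.ofReal_le_ofReal (by
          rw [ENNReal.toReal_ofReal ENNReal.toReal_nonneg]
          linarith)
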